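/- For every choice of parameters a, a', s > 0 with T = (a'+s)/(a'+s+a), there exists an instance in which some expert can strictly increase her payoff by switching her vote against the honest winner. Concretely: there are two proposals, expert 1 with weight w_1 = 1, beliefs p_{11} = T, p_{12} = 1, a second expert with weight w_2 ∈ (0,1) who approves only proposal 1, and all external rewards zero; when expert 1 votes honestly (approving both proposals) the winner is proposal 1, but the deviation in which expert 1 keeps her honest votes except changing her vote on proposal 1 from 1 to 0 makes proposal 2 the winner and strictly increases her utility (from a·T − s·(1−T) = a'·(1−T) to a). -/

import Mathlib

open Finset

/-- Total approving weight of proposal `j` under voting profile `r`. -/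
def approvalWeight {n k : ℕ} (w : Fin n → ℝ) (r : Fin n → Fin k → Bool) (j : Fin k) : ℝ :=
  ∑ i, if r i j then w i else 0

/-- The winner of the approval-voting mechanism `M_AV`: the proposal of smallest index
maximizing the total approving weight; no proposal is selected when every proposal has zero
total approving weight. -/
noncomputable def winner {n k : ℕ} (w : Fin n → ℝ) (r : Fin n → Fin k → Bool) :
    Option (Fin k) :=
  if h : ∀ j, approvalWeight w r j = 0 then none
  else
    some ((Finset.univ.filter fun j => ∀ j', approvalWeight w r j' ≤ approvalWeight w r j).min'
      (by
        obtain ⟨j0, -⟩ := not_forall.mp h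
        obtain ⟨j, -, hj⟩ :=
          Finset.exists_max_image Finset.univ (approvalWeight w r) ⟨j0, Finset.mem_univ j0⟩
        exact ⟨j, Finset.mem_filter.mpr
          ⟨Finset.mem_univ j, fun j' => hj j' (Finset.mem_univ j')⟩⟩))

/-- Expected utility of expert `i` under profile `r`, beliefs `p`, external rewards `g`,
and reward parameters `a`, `a'`, `s`. -/
noncomputable def utility {n k : ℕ} (w : Fin n → ℝ) (p g : Fin n → Fin k → ℝ)
    (a a' s : ℝ) (r : Fin n → Fin k → Bool) (i : Fin n) : ℝ :=
  match winner w r with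
  | none => 0
  | some j => g i j * p i j + (if r i j then a * p i j - s * (1 - p i j) else a' * (1 - p i j))

/-- Estimated quality of proposal `j` with respect to threshold `T`. -/
noncomputable def qual {n k : ℕ} (w : Fin n → ℝ) (p : Fin n → Fin k → ℝ) (T : ℝ)
    (j : Fin k) : ℝ :=
  ∑ i, if T ≤ p i j then w i else 0

/-- The profile obtained from `r` by flipping the single vote of expert `i` on proposal `j`. -/
def flipVote {n k : ℕ} (r : Fin n → Fin k → Bool) (i : Fin n) (j : Fin k) :
    Fin n → Fin k → Bool :=
  Function.update r i (Function.update (r i) j (!(r i j)))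

/-- A profile is semi-strategically consistent if flipping any dishonest vote to its honest
value strictly decreases the deviating expert's utility. -/
def semiStrategicConsistent {n k : ℕ} (w : Fin n → ℝ) (p g : Fin n → Fin k → ℝ)
    (a a' s T : ℝ) (r : Fin n → Fin k → Bool) : Prop :=
  ∀ i j, ((r i j = true ∧ p i j < T) ∨ (r i j = false ∧ T ≤ p i j)) →
    utility w p g a a' s (flipVote r i j) i < utility w p g a a' s r i

/-- Theorem 3.1 (second part): for any choice of parameters `a, a', s > 0` there is an
instance where an expert can strictly increase her payoff by switching her vote against the
honest winner.  Expert 1 has weight `1` and beliefs `p₁₁ = T`, `p₁₂ = 1`; expert 2 has weight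
`w₂ ∈ (0,1)` and approves only proposal 1; all external rewards are zero.  With expert 1
honest (approving both proposals) the winner is proposal 1 and her utility is
`a·T − s·(1−T) = a'·(1−T)`; switching her vote on proposal 1 to disapproval makes proposal 2
the winner and strictly increases her utility to `a`. -/
theorem stmt2 (a a' s : ℝ) (ha : 0 < a) (ha' : 0 < a') (hs : 0 < s)
    (T : ℝ) (hT : T = (a' + s) / (a' + s + a))
    (w2 : ℝ) (hw2 : w2 ∈ Set.Ioo (0:ℝ) 1)
    (p2 : Fin 2 → ℝ) :
    let w : Fin 2 → ℝ := ![1, w2]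
    let p : Fin 2 → Fin 2 → ℝ := ![![T, 1], p2]
    let g : Fin 2 → Fin 2 → ℝ := fun _ _ => 0
    let r : Fin 2 → Fin 2 → Bool := ![![true, true], ![true, false]]
    let rdev : Fin 2 → Fin 2 → Bool := Function.update r 0 ![false, true]
    (∀ j, r 0 j = true ↔ T ≤ p 0 j) ∧
    winner w r = some 0 ∧
    winner w rdev = some 1 ∧
    utility w p g a a' s r 0 = a * T - s * (1 - T) ∧
    utility w p g a a' s r 0 = a' * (1 - T) ∧
    utility w p g a a' s rdev 0 = a ∧
    utility w p g a a' s r 0 < utility w p g a a' s rdev 0 := by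
  intro w p g r rdev
  obtain ⟨hw2a, hw2b⟩ := hw2
  have hD : 0 < a' + s + a := by linarith
  have hT0 : 0 < T := by
    rw [hT]; positivity
  have hT1 : T < 1 := by
    rw [hT, div_lt_one hD]; linarith
  have h1T : 1 - T = a / (a' + s + a) := by
    rw [hT]; field_simp; ring
  -- approval weights
  have haw0 : approvalWeight w r 0 = 1 + w2 := by
    simp [approvalWeight, Fin.sum_univ_two, w, r]
  have haw1 : approvalWeight w r 1 = 1 := by
    simp [approvalWeight, Fin.sum_univ_two, w, r]
  have hdev0 : rdev 0 = ![false, true] := by simp [rdev]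
  have hdev1 : rdev 1 = ![true, false] := by
    simp [rdev, r, Function.update_of_ne (by decide : (1:Fin 2) ≠ 0)]
  have hbw0 : approvalWeight w rdev 0 = w2 := by
    simp [approvalWeight, Fin.sum_univ_two, w, hdev0, hdev1]
  have hbw1 : approvalWeight w rdev 1 = 1 := by
    simp [approvalWeight, Fin.sum_univ_two, w, hdev0, hdev1]
  have hwin1 : winner w r = some 0 := by
    rw [winner, dif_neg (by
      intro h
      have := h 0
      rw [haw0] at this; linarith)]
    congr 1
    have hset : (Finset.univ.filter fun j =>
        ∀ j', approvalWeight w r j' ≤ approvalWeight w r j) = {0} := by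
      ext j
      fin_cases j <;>
        simp [Fin.forall_fin_two, haw0, haw1] <;> linarith
    simp only [hset, Finset.min'_singleton]
  have hwin2 : winner w rdev = some 1 := by
    rw [winner, dif_neg (by
      intro h
      have := h 1
      rw [hbw1] at this; linarith)]
    congr 1
    have hset : (Finset.univ.filter fun j =>
        ∀ j', approvalWeight w rdev j' ≤ approvalWeight w rdev j) = {1} := by
      ext j
      fin_cases j <;>
        simp [Fin.forall_fin_two, hbw0, hbw1] <;> linarith
    simp only [hset, Finset.min'_singleton]
  have hu1 : utility w p g a a' s r 0 = a * T - s * (1 - T) := by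
    rw [utility, hwin1]
    simp [r, p, g]
  have hu2 : utility w p g a a' s rdev 0 = a := by
    rw [utility, hwin2]
    simp [hdev0, p, g]
  refine ⟨?_, hwin1, hwin2, hu1, ?_, hu2, ?_⟩
  · intro j
    fin_cases j <;> simp [r, p] <;> linarith
  · rw [hu1, hT]; field_simp; ring
  · rw [hu1, hu2]
    have : a * T - s * (1 - T) = a' * (1 - T) := by rw [hT]; field_simp; ring
    rw [this, h1T]
    calc a' * (a / (a' + s + a)) < (a' + s + a) * (a / (a' + s + a)) := by
          apply mul_lt_mul_of_pos_right (by linarith) (by positivity)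
      _ = a := by field_simp
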